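/- For n ∈ {1, 2, 3}, any unital C*-algebra generated by the entries of an n × n magic unitary is commutative. -/
import Mathlib

section MagicUnitaryHelpers

variable {A : Type*} [Ring A] [Algebra ℂ A]

private lemma magic_half_trick (x : A) (h : x + x = 0) : x = 0 := by
  have : ((2:ℂ)⁻¹) • (x + x) = x := by
    rw [← two_smul ℂ x, smul_smul]
    norm_num
  rw [h, smul_zero] at this
  exact this.symm

/-- If three idempotents sum to `1`, they are mutually orthogonal. -/
private lemma magic_orth3 (p q r : A) (hp : p*p = p) (hq : q*q = q) (hr : r*r = r)
    (h : p + q + r = 1) : p * q = 0 := by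
  have h1 : p + q = 1 - r := by rw [eq_sub_iff_add_eq]; exact h
  have key : p*q + q*p = 0 := by
    calc p*q + q*p
        = ((p+q)*(p+q) - (p+q)) - (p*p - p) - (q*q - q) := by noncomm_ring
      _ = ((1-r)*(1-r) - (1-r)) - (p*p - p) - (q*q - q) := by rw [h1]
      _ = (r*r - r) - (p*p - p) - (q*q - q) := by noncomm_ring
      _ = 0 := by rw [hp, hq, hr]; simp
  have e1 : p*q = -(q*p) := eq_neg_of_add_eq_zero_left key
  have e2 : p*q = q*p := by
    calc p*q = (p*p)*q := by rw [hp]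
      _ = p*(p*q) := by rw [mul_assoc]
      _ = p*(-(q*p)) := by rw [e1]
      _ = -((p*q)*p) := by noncomm_ring
      _ = -((-(q*p))*p) := by rw [e1]
      _ = (q*p)*p := by noncomm_ring
      _ = q*p := by rw [mul_assoc, hp]
  rw [← e2] at key
  exact magic_half_trick _ key

end MagicUnitaryHelpers

/-- The key commutation trick for magic unitaries: if `x` is orthogonal to the rest of
its row and to the other entry columns appropriately, then `x*y = x*y*x` is self-adjoint,
hence `x` and `y` commute. -/
private lemma magic_comm3 {A : Type*} [Ring A] [StarRing A]
    (x y xl xc yj yc : A) (hx : star x = x) (hy : star y = y)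
    (hrowx : x + xl + xc = 1) (hrowy : yj + y + yc = 1)
    (h2 : x*xc = 0) (h3 : x*yj = 0) (h4 : y*xl = 0) (h5 : yc*xc = 0) :
    x*y = y*x := by
  have hyx : y = 1 - yj - yc := by
    rw [eq_sub_iff_add_eq, eq_sub_iff_add_eq]
    calc y + yc + yj = yj + y + yc := by abel
      _ = 1 := hrowy
  have t1 : x*y*xl = 0 := by rw [mul_assoc, h4, mul_zero]
  have t2 : x*y*xc = 0 := by
    calc x*y*xc = x*((1 - yj - yc)*xc) := by rw [← hyx, mul_assoc]
      _ = x*xc - (x*yj)*xc - x*(yc*xc) := by noncomm_ring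
      _ = 0 := by rw [h2, h3, h5, mul_zero, zero_mul]; simp
  have key : x*y = x*y*x := by
    calc x*y = x*y*(x + xl + xc) := by rw [hrowx, mul_one]
      _ = x*y*x + x*y*xl + x*y*xc := by noncomm_ring
      _ = x*y*x := by rw [t1, t2, add_zero, add_zero]
  symm
  calc y*x = star (x*y) := by rw [star_mul, hx, hy]
    _ = star (x*y*x) := by rw [← key]
    _ = x*(y*x) := by rw [star_mul, star_mul, hx, hy]
    _ = x*y*x := by rw [mul_assoc]
    _ = x*y := key.symm

private lemma magic_perm2 {M : Type*} [AddCommMonoid M] (v : Fin 2 → M) (j l : Fin 2)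
    (h : j ≠ l) : v j + v l = v 0 + v 1 := by
  fin_cases j <;> fin_cases l <;> simp_all <;> abel

private lemma magic_perm3 {M : Type*} [AddCommMonoid M] (v : Fin 3 → M) (j l c : Fin 3)
    (hjl : j ≠ l) (hjc : j ≠ c) (hlc : l ≠ c) : v j + v l + v c = v 0 + v 1 + v 2 := by
  fin_cases j <;> fin_cases l <;> fin_cases c <;> simp_all <;> abel

private lemma magic_third3 : ∀ j l : Fin 3, j ≠ l → ∃ c, j ≠ c ∧ l ≠ c := by decide

/-- An element commuting with all entries of the magic unitary commutes with everything. -/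
private lemma magic_central {A : Type*} [CStarAlgebra A] {n : ℕ}
    (u : Matrix (Fin n) (Fin n) A)
    (hsa : ∀ i j, IsSelfAdjoint (u i j))
    (hgen : (StarAlgebra.adjoin ℂ {x : A | ∃ i j, x = u i j}).topologicalClosure = ⊤)
    (a : A) (h : ∀ k l, a * u k l = u k l * a) : ∀ b : A, a * b = b * a := by
  set S : Set A := {x : A | ∃ i j, x = u i j} with hS
  have hCclosed : IsClosed {b : A | a * b = b * a} :=
    isClosed_eq (continuous_const.mul continuous_id) (continuous_id.mul continuous_const)
  have hmem : ∀ x ∈ S, a * x = x * a := by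
    rintro x ⟨i, j, rfl⟩
    exact h i j
  have hsub : (StarAlgebra.adjoin ℂ S : Set A) ⊆ {b : A | a * b = b * a} := by
    intro z hz
    have hz' : z ∈ Algebra.adjoin ℂ (S ∪ star S) := by
      rwa [SetLike.mem_coe, ← StarSubalgebra.mem_toSubalgebra,
        StarAlgebra.adjoin_toSubalgebra] at hz
    have hle : Algebra.adjoin ℂ (S ∪ star S) ≤ Subalgebra.centralizer ℂ {a} := by
      rw [Algebra.adjoin_le_iff]
      rintro x (hx | hx)
      · intro g hg
        rw [Set.mem_singleton_iff] at hg
        subst hg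
        exact hmem x hx
      · obtain ⟨i, j, hx'⟩ := hx
        have hxe : x = u i j := by
          rw [← (hsa i j).star_eq, ← hx', star_star]
        subst hxe
        intro g hg
        rw [Set.mem_singleton_iff] at hg
        subst hg
        exact h i j
    have := hle hz'
    rw [Subalgebra.mem_centralizer_iff] at this
    exact this a rfl
  have hdense : closure (StarAlgebra.adjoin ℂ S : Set A) = Set.univ := by
    have := congrArg (fun s : StarSubalgebra ℂ A => (s : Set A)) hgen
    simpa using this
  intro b
  have : b ∈ closure (StarAlgebra.adjoin ℂ S : Set A) := by
    rw [hdense]; trivial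
  exact hCclosed.closure_subset_iff.mpr hsub this

/-- If all entries of the magic unitary pairwise commute, the whole algebra is commutative. -/
private lemma magic_conclude {A : Type*} [CStarAlgebra A] {n : ℕ}
    (u : Matrix (Fin n) (Fin n) A)
    (hsa : ∀ i j, IsSelfAdjoint (u i j))
    (hgen : (StarAlgebra.adjoin ℂ {x : A | ∃ i j, x = u i j}).topologicalClosure = ⊤)
    (hcomm : ∀ i j k l, u i j * u k l = u k l * u i j) : ∀ a b : A, a * b = b * a := by
  have step1 : ∀ k l (b : A), u k l * b = b * u k l := fun k l =>
    magic_central u hsa hgen (u k l) (fun k' l' => hcomm k l k' l')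
  intro a b
  exact magic_central u hsa hgen a (fun k l => (step1 k l a).symm) b

/-- For `n ≤ 3`, a unital C*-algebra generated by the entries of an `n × n`
magic unitary is commutative (`S_n⁺ = S_n` for `n ≤ 3`). -/
theorem magicUnitary_generated_algebra_commutative_of_le_three
    {A : Type*} [CStarAlgebra A] {n : ℕ} (hn : n = 1 ∨ n = 2 ∨ n = 3)
    (u : Matrix (Fin n) (Fin n) A)
    (hsa : ∀ i j, IsSelfAdjoint (u i j))
    (hidem : ∀ i j, u i j * u i j = u i j)
    (hrow : ∀ i, ∑ j, u i j = 1)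
    (hcol : ∀ j, ∑ i, u i j = 1)
    (hgen : (StarAlgebra.adjoin ℂ {x : A | ∃ i j, x = u i j}).topologicalClosure = ⊤) :
    ∀ a b : A, a * b = b * a := by
  apply magic_conclude u hsa hgen
  rcases hn with rfl | rfl | rfl
  · -- n = 1
    have h1 : ∀ i j : Fin 1, u i j = 1 := by
      intro i j
      have hi : i = 0 := Subsingleton.elim _ _
      have hj : j = 0 := Subsingleton.elim _ _
      subst hi; subst hj
      have := hrow 0
      rwa [Fin.sum_univ_one] at this
    intro i j k l
    rw [h1 i j, h1 k l]
  · -- n = 2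
    have hrow2 : ∀ i, u i 0 + u i 1 = 1 := by
      intro i; have := hrow i; rwa [Fin.sum_univ_two] at this
    have hcol2 : ∀ j, u 0 j + u 1 j = 1 := by
      intro j; have := hcol j; rwa [Fin.sum_univ_two] at this
    have rowo : ∀ i j l, j ≠ l → u i j * u i l = 0 := by
      intro i j l hjl
      refine magic_orth3 _ _ 0 (hidem i j) (hidem i l) (by simp) ?_
      rw [add_zero, magic_perm2 (fun m => u i m) j l hjl]
      exact hrow2 i
    have colo : ∀ j i k, i ≠ k → u i j * u k j = 0 := by
      intro j i k hik
      refine magic_orth3 _ _ 0 (hidem i j) (hidem k j) (by simp) ?_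
      rw [add_zero, magic_perm2 (fun m => u m j) i k hik]
      exact hcol2 j
    intro i j k l
    rcases eq_or_ne i k with rfl | hik
    · rcases eq_or_ne j l with rfl | hjl
      · rfl
      · rw [rowo i j l hjl, rowo i l j hjl.symm]
    · rcases eq_or_ne j l with rfl | hjl
      · rw [colo j i k hik, colo j k i hik.symm]
      · apply magic_comm3 (u i j) (u k l) (u i l) 0 0 (1 - u k l)
          (hsa i j).star_eq (hsa k l).star_eq
        · rw [add_zero, magic_perm2 (fun m => u i m) j l hjl]; exact hrow2 i
        · rw [zero_add]; abel
        · rw [mul_zero]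
        · rw [mul_zero]
        · exact colo l k i hik.symm
        · rw [mul_zero]
  · -- n = 3
    have hrow3 : ∀ i, u i 0 + u i 1 + u i 2 = 1 := by
      intro i; have := hrow i; rwa [Fin.sum_univ_three] at this
    have hcol3 : ∀ j, u 0 j + u 1 j + u 2 j = 1 := by
      intro j; have := hcol j; rwa [Fin.sum_univ_three] at this
    have rowo : ∀ i j l, j ≠ l → u i j * u i l = 0 := by
      intro i j l hjl
      obtain ⟨c, hjc, hlc⟩ := magic_third3 j l hjl
      refine magic_orth3 _ _ _ (hidem i j) (hidem i l) (hidem i c) ?_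
      rw [magic_perm3 (fun m => u i m) j l c hjl hjc hlc]
      exact hrow3 i
    have colo : ∀ j i k, i ≠ k → u i j * u k j = 0 := by
      intro j i k hik
      obtain ⟨c, hic, hkc⟩ := magic_third3 i k hik
      refine magic_orth3 _ _ _ (hidem i j) (hidem k j) (hidem c j) ?_
      rw [magic_perm3 (fun m => u m j) i k c hik hic hkc]
      exact hcol3 j
    intro i j k l
    rcases eq_or_ne i k with rfl | hik
    · rcases eq_or_ne j l with rfl | hjl
      · rfl
      · rw [rowo i j l hjl, rowo i l j hjl.symm]
    · rcases eq_or_ne j l with rfl | hjl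
      · rw [colo j i k hik, colo j k i hik.symm]
      · obtain ⟨c, hjc, hlc⟩ := magic_third3 j l hjl
        apply magic_comm3 (u i j) (u k l) (u i l) (u i c) (u k j) (u k c)
          (hsa i j).star_eq (hsa k l).star_eq
        · rw [magic_perm3 (fun m => u i m) j l c hjl hjc hlc]; exact hrow3 i
        · rw [magic_perm3 (fun m => u k m) j l c hjl hjc hlc]; exact hrow3 k
        · exact rowo i j c hjc
        · exact colo j i k hik
        · exact colo l k i hik.symm
        · exact colo c k i hik.symm
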